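/- For the no-stop closed-form trajectory with t̃ = sqrt((t_f v_m - |x_0|)/a_m), t_acc = t_full - t̃, t_dec = t_acc - t̃, and acceleration 0, -a_m, a_m, 0 on [0,t_dec), [t_dec,t_acc), [t_acc,t_full), [t_full,t_f], starting at x(0) = x_0 < 0 with speed v_m and t_full = t_f: the minimum speed attained is v_m - a_m t̃ = v_m - sqrt(a_m(t_f v_m - |x_0|)), and the trajectory ends at x(t_f) = 0 with speed v_m. The minimum speed is nonnegative if and only if t_f v_m - |x_0| ≤ v_m^2/a_m, i.e., iff L = v_m(t_f - v_m/a_m) ≤ |x_0|. -/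

import Mathlib

set_option maxHeartbeats 1000000 in
/-- The no-stop closed-form trajectory with `t̃ = sqrt((t_f v_m - |x_0|)/a_m)`:
its minimum speed is `v_m - a_m t̃ = v_m - sqrt(a_m (t_f v_m - |x_0|))`, it ends
at position `0` with speed `v_m`, and the minimum speed is nonnegative iff
`t_f v_m - |x_0| ≤ v_m²/a_m`, i.e. iff `L = v_m (t_f - v_m/a_m) ≤ |x_0|`. -/
theorem no_stop_trajectory_valid
    (a_m v_m x_0 ttil t_dec t_acc t_full t_f : ℝ) (x v : ℝ → ℝ)
    (ha : 0 < a_m) (hv : 0 < v_m) (hx0 : x_0 < 0)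
    (hfree : 0 ≤ t_f * v_m - |x_0|)
    (httil : ttil = Real.sqrt ((t_f * v_m - |x_0|) / a_m))
    (hfull : t_full = t_f)
    (hacc : t_acc = t_full - ttil) (hdec : t_dec = t_acc - ttil)
    (hdec0 : 0 ≤ t_dec)
    (hvdef : ∀ t, v t =
      if t < t_dec then v_m
      else if t < t_acc then v_m - a_m * (t - t_dec)
      else if t < t_full then (v_m - a_m * ttil) + a_m * (t - t_acc)
      else v_m)
    (hxdef : ∀ t, x t = x_0 + ∫ s in (0 : ℝ)..t, v s) :
    v t_acc = v_m - a_m * ttil ∧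
    v_m - a_m * ttil = v_m - Real.sqrt (a_m * (t_f * v_m - |x_0|)) ∧
    (∀ t ∈ Set.Icc 0 t_f, v_m - a_m * ttil ≤ v t) ∧
    x t_f = 0 ∧ v t_f = v_m ∧
    (0 ≤ v_m - a_m * ttil ↔ t_f * v_m - |x_0| ≤ v_m ^ 2 / a_m) ∧
    (t_f * v_m - |x_0| ≤ v_m ^ 2 / a_m ↔ v_m * (t_f - v_m / a_m) ≤ |x_0|) := by
  have httil0 : 0 ≤ ttil := httil ▸ Real.sqrt_nonneg _
  have hsq : ttil ^ 2 = (t_f * v_m - |x_0|) / a_m := by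
    rw [httil, Real.sq_sqrt (div_nonneg hfree ha.le)]
  have ham2 : a_m * ttil ^ 2 = t_f * v_m - |x_0| := by
    rw [hsq]; field_simp
  have ho1 : t_dec ≤ t_acc := by linarith
  have ho2 : t_acc ≤ t_f := by linarith
  have hamt : a_m * ttil = Real.sqrt (a_m * (t_f * v_m - |x_0|)) := by
    rw [httil, show a_m = Real.sqrt (a_m ^ 2) from (Real.sqrt_sq ha.le).symm,
      ← Real.sqrt_mul (sq_nonneg a_m)]
    congr 1
    field_simp; ring_nf; rw [Real.sq_sqrt (sq_nonneg a_m)]; ring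
  have e1 : Set.EqOn v (fun _ => v_m) (Set.uIcc 0 t_dec) := by
    intro t ht
    rw [Set.uIcc_of_le hdec0] at ht
    rw [hvdef t]
    split_ifs with h1 h2 h3
    · rfl
    · have : t = t_dec := le_antisymm ht.2 (not_lt.1 h1)
      rw [this]; ring
    · have h4 : ttil = 0 := le_antisymm (by linarith [ht.2, not_lt.1 h2]) httil0
      have h5 : t = t_acc := by linarith [ht.2, not_lt.1 h2]
      rw [h4, h5]; ring
    · rfl
  have e2 : Set.EqOn v (fun s => v_m - a_m * (s - t_dec)) (Set.uIcc t_dec t_acc) := by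
    intro t ht
    rw [Set.uIcc_of_le ho1] at ht
    rw [hvdef t]
    split_ifs with h1 h2 h3
    · exact absurd h1 (not_lt.2 ht.1)
    · rfl
    · have h5 : t = t_acc := le_antisymm ht.2 (not_lt.1 h2)
      simp only [h5]
      rw [show t_acc = t_dec + ttil by linarith]; ring
    · simp only
      have h4 : ttil = 0 := le_antisymm (by linarith [ht.2, not_lt.1 h3]) httil0
      rw [show t = t_dec by linarith [ht.1, ht.2]]
      ring
  have e3 : Set.EqOn v (fun s => (v_m - a_m * ttil) + a_m * (s - t_acc)) (Set.uIcc t_acc t_f) := by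
    intro t ht
    rw [Set.uIcc_of_le ho2] at ht
    rw [hvdef t]
    split_ifs with h1 h2 h3
    · exact absurd h1 (not_lt.2 (by linarith [ht.1]))
    · exact absurd h2 (not_lt.2 ht.1)
    · rfl
    · have h5 : t = t_f := le_antisymm ht.2 (by linarith [not_lt.1 h3])
      simp only [h5]
      rw [show t_f = t_acc + ttil by linarith]; ring
  have i1 : IntervalIntegrable v MeasureTheory.volume 0 t_dec :=
    (continuousOn_const.congr e1).intervalIntegrable
  have c2 : Continuous fun s : ℝ => v_m - a_m * (s - t_dec) := by continuity
  have c3 : Continuous fun s : ℝ => (v_m - a_m * ttil) + a_m * (s - t_acc) := by continuity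
  have i2 : IntervalIntegrable v MeasureTheory.volume t_dec t_acc :=
    (c2.continuousOn.congr e2).intervalIntegrable
  have i3 : IntervalIntegrable v MeasureTheory.volume t_acc t_f :=
    (c3.continuousOn.congr e3).intervalIntegrable
  have iid : IntervalIntegrable (fun s : ℝ => a_m * s) MeasureTheory.volume t_dec t_acc :=
    (continuous_const.mul continuous_id).intervalIntegrable _ _
  have iid' : IntervalIntegrable (fun s : ℝ => a_m * s) MeasureTheory.volume t_acc t_f :=
    (continuous_const.mul continuous_id).intervalIntegrable _ _
  have I1 : (∫ s in (0:ℝ)..t_dec, v s) = v_m * t_dec := by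
    rw [intervalIntegral.integral_congr e1, intervalIntegral.integral_const]
    simp [mul_comm]
  have I2 : (∫ s in t_dec..t_acc, v s) = v_m * ttil - a_m * ttil ^ 2 / 2 := by
    rw [intervalIntegral.integral_congr e2]
    have h : (∫ s in t_dec..t_acc, (v_m - a_m * (s - t_dec))) =
        (∫ s in t_dec..t_acc, ((v_m + a_m * t_dec) - a_m * s)) := by
      congr 1; funext s; ring
    rw [h, intervalIntegral.integral_sub intervalIntegrable_const iid,
      intervalIntegral.integral_const_mul, integral_id,
      intervalIntegral.integral_const]
    rw [show t_acc = t_dec + ttil by linarith]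
    simp only [smul_eq_mul]; ring
  have I3 : (∫ s in t_acc..t_f, v s) = v_m * ttil - a_m * ttil ^ 2 / 2 := by
    rw [intervalIntegral.integral_congr e3]
    have h : (∫ s in t_acc..t_f, ((v_m - a_m * ttil) + a_m * (s - t_acc))) =
        (∫ s in t_acc..t_f, ((v_m - a_m * ttil - a_m * t_acc) + a_m * s)) := by
      congr 1; funext s; ring
    rw [h, intervalIntegral.integral_add intervalIntegrable_const iid',
      intervalIntegral.integral_const_mul, integral_id,
      intervalIntegral.integral_const]
    rw [show t_f = t_acc + ttil by linarith]
    simp only [smul_eq_mul]; ring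
  have hxf : x t_f = 0 := by
    rw [hxdef t_f, ← intervalIntegral.integral_add_adjacent_intervals (i1.trans i2) i3,
      ← intervalIntegral.integral_add_adjacent_intervals i1 i2, I1, I2, I3]
    have habs : |x_0| = -x_0 := abs_of_neg hx0
    rw [show t_dec = t_f - 2 * ttil by linarith]
    nlinarith [ham2, habs]
  have hvta : v t_acc = v_m - a_m * ttil := by
    rw [hvdef t_acc]
    split_ifs with h1 h2 h3
    · exact absurd h1 (not_lt.2 ho1)
    · exact absurd h2 (lt_irrefl _)
    · ring
    · have : ttil = 0 := le_antisymm (by linarith [not_lt.1 h3]) httil0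
      rw [this]; ring
  have hvtf : v t_f = v_m := by
    rw [hvdef t_f]
    split_ifs with h1 h2 h3
    · linarith
    · linarith
    · linarith
    · rfl
  refine ⟨hvta, by rw [hamt], ?_, hxf, hvtf, ?_, ?_⟩
  · intro t ht
    have hmt : 0 ≤ a_m * ttil := mul_nonneg ha.le httil0
    rw [hvdef t]
    split_ifs with h1 h2 h3
    · linarith
    · nlinarith [mul_lt_mul_of_pos_left (show t - t_dec < ttil by linarith) ha]
    · nlinarith [mul_nonneg ha.le (show (0:ℝ) ≤ t - t_acc by linarith [not_lt.1 h2])]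
    · linarith
  · rw [sub_nonneg, hamt, Real.sqrt_le_iff]
    constructor
    · rintro ⟨-, h⟩
      rw [le_div_iff₀ ha]; nlinarith
    · intro h
      refine ⟨hv.le, ?_⟩
      rw [le_div_iff₀ ha] at h; nlinarith
  · have hq : v_m * (t_f - v_m / a_m) = t_f * v_m - v_m ^ 2 / a_m := by ring
    constructor <;> intro h <;> linarith
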